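/- Let S be a partial plane spread in PG(6,2) and let H be a hyperplane of V = F₂⁷. If i is the number of blocks of S contained in H, then 4·i ≤ 63 − 3·#S (in particular 3·#S + 4·i ≤ 63) and the number of holes of S contained in H equals 63 − 3·#S − 4·i. -/

import Mathlib

open Module

abbrev V2 : Type := Fin 7 → ZMod 2

/-- A partial plane spread in PG(6,2): a set of 3-dimensional subspaces of `V2 = F₂⁷`
(the blocks) any two distinct members of which intersect trivially. -/
def IsPPS (S : Set (Submodule (ZMod 2) V2)) : Prop :=
  (∀ B ∈ S, finrank (ZMod 2) ↥B = 3) ∧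
    ∀ B₁ ∈ S, ∀ B₂ ∈ S, B₁ ≠ B₂ → B₁ ⊓ B₂ = ⊥

/-- A point (1-dimensional subspace) of `V2` is a hole of `S` if it is contained
in no block of `S`. -/
def IsHole (S : Set (Submodule (ZMod 2) V2)) (P : Submodule (ZMod 2) V2) : Prop :=
  finrank (ZMod 2) ↥P = 1 ∧ ∀ B ∈ S, ¬ P ≤ B

/-- The number of holes of `S` contained in the subspace `X`. -/
noncomputable def holeCount (S : Set (Submodule (ZMod 2) V2))
    (X : Submodule (ZMod 2) V2) : ℕ :=
  {P | IsHole S P ∧ P ≤ X}.ncard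

/-- The span `⟨N⟩` of the set of holes of `S`. -/
noncomputable def holeSpan (S : Set (Submodule (ZMod 2) V2)) : Submodule (ZMod 2) V2 :=
  sSup {P | IsHole S P}

/-- The number of blocks of `S` contained in the subspace `H`. -/
noncomputable def blocksIn (S : Set (Submodule (ZMod 2) V2))
    (H : Submodule (ZMod 2) V2) : ℕ :=
  {B ∈ S | B ≤ H}.ncard

/-- `spec S i` = the number of hyperplanes of `V2` containing exactly `i` blocks of `S`. -/
noncomputable def spec (S : Set (Submodule (ZMod 2) V2)) (i : ℕ) : ℕ :=
  {H : Submodule (ZMod 2) V2 | finrank (ZMod 2) ↥H = 6 ∧ blocksIn S H = i}.ncard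

instance : FiniteDimensional (ZMod 2) V2 := by infer_instance

lemma natcard_sub (X : Submodule (ZMod 2) V2) :
    Nat.card ↥X = 2 ^ finrank (ZMod 2) X := by
  haveI : Fintype ↥X := Fintype.ofFinite _
  rw [Nat.card_eq_fintype_card]
  have := card_eq_pow_finrank (K := ZMod 2) (V := ↥X)
  rwa [ZMod.card] at this

lemma ncard_nz (X : Submodule (ZMod 2) V2) :
    ((X : Set V2) \ {0}).ncard = 2 ^ finrank (ZMod 2) X - 1 := by
  rw [Set.ncard_diff_singleton_of_mem (Submodule.zero_mem X)]
  rw [← Nat.card_coe_set_eq, SetLike.coe_sort_coe, natcard_sub]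

lemma span_inj {v w : V2} (hv : v ≠ 0) (hw : w ≠ 0)
    (h : Submodule.span (ZMod 2) {v} = Submodule.span (ZMod 2) {w}) : v = w := by
  have hm : w ∈ Submodule.span (ZMod 2) {v} := h ▸ Submodule.mem_span_singleton_self w
  obtain ⟨c, hc⟩ := Submodule.mem_span_singleton.mp hm
  fin_cases c
  · exact absurd ((zero_smul (ZMod 2) v).symm.trans hc).symm hw
  · exact (one_smul (ZMod 2) v).symm.trans hc

lemma exists_span (P : Submodule (ZMod 2) V2) (hP : finrank (ZMod 2) P = 1) :
    ∃ v : V2, v ≠ 0 ∧ P = Submodule.span (ZMod 2) {v} := by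
  have hbot : P ≠ ⊥ := by
    intro h; rw [h] at hP; simp at hP
  obtain ⟨v, hvP, hv⟩ := Submodule.exists_mem_ne_zero_of_ne_bot hbot
  refine ⟨v, hv, ?_⟩
  have hle : Submodule.span (ZMod 2) {v} ≤ P := by
    rwa [Submodule.span_singleton_le_iff_mem]
  exact (Submodule.eq_of_le_of_finrank_eq hle (by rw [finrank_span_singleton hv, hP])).symm

lemma finrank_V2 : finrank (ZMod 2) V2 = 7 := by
  simp [Module.finrank_fin_fun]

lemma inf_rank (B H : Submodule (ZMod 2) V2) (hB : finrank (ZMod 2) B = 3)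
    (hH : finrank (ZMod 2) H = 6) (hnle : ¬ B ≤ H) :
    finrank (ZMod 2) ↥(B ⊓ H) = 2 := by
  have h1 := Submodule.finrank_sup_add_finrank_inf_eq B H
  have h2 : finrank (ZMod 2) ↥(B ⊔ H) ≤ 7 := by
    have := Submodule.finrank_le (B ⊔ H)
    rwa [finrank_V2] at this
  have h3 : H < B ⊔ H := right_lt_sup.mpr hnle
  have h4 : finrank (ZMod 2) ↥H < finrank (ZMod 2) ↥(B ⊔ H) :=
    Submodule.finrank_lt_finrank_of_lt h3
  omega

theorem pps_hyperplane_holes (S : Set (Submodule (ZMod 2) V2)) (hS : IsPPS S)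
    (H : Submodule (ZMod 2) V2) (hH : finrank (ZMod 2) ↥H = 6)
    (i : ℕ) (hi : i = blocksIn S H) :
    4 * i ≤ 63 - 3 * S.ncard ∧ 3 * S.ncard + 4 * i ≤ 63 ∧
      holeCount S H = 63 - 3 * S.ncard - 4 * i := by
  classical
  obtain ⟨hdim, hdisj⟩ := hS
  have hSfin : S.Finite := Set.toFinite S
  set s : Finset (Submodule (ZMod 2) V2) := hSfin.toFinset with hsdef
  have hmem : ∀ B, B ∈ s ↔ B ∈ S := fun B => hSfin.mem_toFinset
  set f : Submodule (ZMod 2) V2 → Finset V2 :=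
    fun X => (Set.toFinite ((X : Set V2) \ {0})).toFinset with hfdef
  have hf : ∀ X v, v ∈ f X ↔ v ∈ X ∧ v ≠ 0 := by
    intro X v
    simp only [hfdef, Set.Finite.mem_toFinset, Set.mem_diff, SetLike.mem_coe,
      Set.mem_singleton_iff]
  have hfcard : ∀ X : Submodule (ZMod 2) V2,
      (f X).card = 2 ^ finrank (ZMod 2) X - 1 := by
    intro X
    rw [← Set.ncard_eq_toFinset_card _ (Set.toFinite _), ncard_nz]
  set U : Finset V2 := s.biUnion (fun B => f (B ⊓ H)) with hUdef
  have hUsub : U ⊆ f H := by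
    intro v hv
    simp only [hUdef, Finset.mem_biUnion] at hv
    obtain ⟨B, _, hvB⟩ := hv
    rw [hf] at hvB ⊢
    exact ⟨(Submodule.mem_inf.mp hvB.1).2, hvB.2⟩
  have hUmem : ∀ v, v ∈ U ↔ ∃ B ∈ S, v ∈ B ∧ v ∈ H ∧ v ≠ 0 := by
    intro v
    simp only [hUdef, Finset.mem_biUnion, hmem]
    constructor
    · rintro ⟨B, hB, hv⟩
      rw [hf] at hv
      exact ⟨B, hB, (Submodule.mem_inf.mp hv.1).1, (Submodule.mem_inf.mp hv.1).2, hv.2⟩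
    · rintro ⟨B, hB, h1, h2, h3⟩
      exact ⟨B, hB, (hf _ _).mpr ⟨Submodule.mem_inf.mpr ⟨h1, h2⟩, h3⟩⟩
  set holesF : Finset V2 := f H \ U with hhdef
  -- card of U
  have hUcard : U.card = ∑ B ∈ s, (f (B ⊓ H)).card := by
    apply Finset.card_biUnion
    intro B₁ h1 B₂ h2 hne
    simp only [Function.onFun]
    rw [Finset.disjoint_left]
    intro v hv1 hv2
    rw [hf] at hv1 hv2
    have : v ∈ B₁ ⊓ B₂ :=
      Submodule.mem_inf.mpr ⟨(Submodule.mem_inf.mp hv1.1).1, (Submodule.mem_inf.mp hv2.1).1⟩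
    rw [hdisj B₁ ((hmem _).mp h1) B₂ ((hmem _).mp h2) hne] at this
    exact hv1.2 this
  -- i equals card of filter
  have hicard : i = (s.filter (fun B => B ≤ H)).card := by
    rw [hi, blocksIn, ← Set.ncard_coe_finset]
    congr 1
    ext B
    simp [hmem B]
  have hsplit : (s.filter (fun B => B ≤ H)).card
      + (s.filter (fun B => ¬ B ≤ H)).card = s.card :=
    Finset.card_filter_add_card_filter_not _
  have hsum : ∑ B ∈ s, (f (B ⊓ H)).card
      = 7 * (s.filter (fun B => B ≤ H)).card
        + 3 * (s.filter (fun B => ¬ B ≤ H)).card := by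
    have h7 : ∀ B ∈ s.filter (fun B => B ≤ H), (f (B ⊓ H)).card = 7 := by
      intro B hB
      rw [Finset.mem_filter] at hB
      rw [inf_eq_left.mpr hB.2, hfcard, hdim B ((hmem B).mp hB.1)]
      norm_num
    have h3' : ∀ B ∈ s.filter (fun B => ¬ B ≤ H), (f (B ⊓ H)).card = 3 := by
      intro B hB
      rw [Finset.mem_filter] at hB
      rw [hfcard, inf_rank B H (hdim B ((hmem B).mp hB.1)) hH hB.2]
      norm_num
    rw [← Finset.sum_filter_add_sum_filter_not s (fun B => B ≤ H),
      Finset.sum_congr rfl h7, Finset.sum_congr rfl h3', Finset.sum_const,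
      Finset.sum_const, smul_eq_mul, smul_eq_mul, mul_comm, mul_comm 3]
  have hHcard : (f H).card = 63 := by rw [hfcard, hH]; norm_num
  have hpart : holesF.card + U.card = 63 := by
    rw [hhdef, ← hHcard]
    exact Finset.card_sdiff_add_card_eq_card hUsub
  -- holeCount = holesF.card
  have hset : {P | IsHole S P ∧ P ≤ H}
      = (fun v => Submodule.span (ZMod 2) {v}) '' (holesF : Set V2) := by
    ext P
    simp only [Set.mem_setOf_eq, Set.mem_image, Finset.mem_coe, hhdef,
      Finset.mem_sdiff]
    constructor
    · rintro ⟨⟨hP1, hP2⟩, hPH⟩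
      obtain ⟨v, hv, rfl⟩ := exists_span P hP1
      have hvP : v ∈ Submodule.span (ZMod 2) {v} := Submodule.mem_span_singleton_self v
      refine ⟨v, ⟨(hf H v).mpr ⟨hPH hvP, hv⟩, ?_⟩, rfl⟩
      intro hvU
      obtain ⟨B, hB, hvB, _, _⟩ := (hUmem v).mp hvU
      exact hP2 B hB ((Submodule.span_singleton_le_iff_mem v B).mpr hvB)
    · rintro ⟨v, ⟨hvfH, hvU⟩, rfl⟩
      obtain ⟨hvH, hv⟩ := (hf H v).mp hvfH
      refine ⟨⟨finrank_span_singleton hv, fun B hB hle => ?_⟩,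
        (Submodule.span_singleton_le_iff_mem v H).mpr hvH⟩
      exact hvU ((hUmem v).mpr ⟨B, hB,
        hle (Submodule.mem_span_singleton_self v), hvH, hv⟩)
  have hinj : Set.InjOn (fun v => Submodule.span (ZMod 2) {v}) (holesF : Set V2) := by
    intro v hv w hw h
    rw [Finset.mem_coe, hhdef, Finset.mem_sdiff] at hv hw
    exact span_inj ((hf H v).mp hv.1).2 ((hf H w).mp hw.1).2 h
  have hhc : holeCount S H = holesF.card := by
    rw [holeCount, hset, Set.ncard_image_of_injOn hinj, Set.ncard_coe_finset]
  have hScard : S.ncard = s.card := Set.ncard_eq_toFinset_card _ _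
  omega
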